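/- The continuous function N : [0,∞) → ℝ, N(s) = s·sin(s), satisfies limsup_{s→∞} N(s) = +∞ and liminf_{s→∞} N(s) = −∞ (hence N is surjective onto ℝ), but N does not have the Nussbaum properties: indeed, for every k > 0, (1/k)·∫₀^{k} κ·sin(κ) dκ = (sin k)/k − cos k, and sup_{k>0} (1/k)·∫₀^{k} κ·sin(κ) dκ ≤ 2 < ∞, so the condition 'sup_{k>k⁰} (1/(k−k⁰))·∫_{k⁰}^{k} N(κ) dκ = +∞ for every k⁰ ≥ 0' fails at k⁰ = 0. -/

import Mathlib

open Set Filter Real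

lemma sps_aux_big (a c : ℝ) : ∃ s ≥ a, c ≤ s * Real.sin s := by
  obtain ⟨n, hn⟩ := exists_nat_ge (max a c)
  refine ⟨π / 2 + n * (2 * π), ?_, ?_⟩
  · have : (n : ℝ) ≤ n * (2 * π) := by
      nlinarith [Real.pi_gt_three, Nat.cast_nonneg (α := ℝ) n]
    have := le_of_max_le_left hn
    nlinarith [Real.pi_gt_three]
  · rw [Real.sin_add_nat_mul_two_pi, Real.sin_pi_div_two, mul_one]
    have : (n : ℝ) ≤ n * (2 * π) := by
      nlinarith [Real.pi_gt_three, Nat.cast_nonneg (α := ℝ) n]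
    have := le_of_max_le_right hn
    nlinarith [Real.pi_gt_three]

lemma sps_aux_small (a c : ℝ) : ∃ s ≥ a, s * Real.sin s ≤ c := by
  obtain ⟨n, hn⟩ := exists_nat_ge (max a (-c))
  refine ⟨π / 2 + π + n * (2 * π), ?_, ?_⟩
  · have : (n : ℝ) ≤ n * (2 * π) := by
      nlinarith [Real.pi_gt_three, Nat.cast_nonneg (α := ℝ) n]
    have := le_of_max_le_left hn
    nlinarith [Real.pi_gt_three]
  · rw [show π / 2 + π + n * (2 * π) = (π / 2 + n * (2 * π)) + π by ring,
      Real.sin_add_pi, Real.sin_add_nat_mul_two_pi, Real.sin_pi_div_two]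
    have h1 : (n : ℝ) ≤ n * (2 * π) := by
      nlinarith [Real.pi_gt_three, Nat.cast_nonneg (α := ℝ) n]
    have h2 := le_of_max_le_right hn
    nlinarith [Real.pi_gt_three]

lemma sps_integral (k : ℝ) :
    (∫ κ in (0 : ℝ)..k, κ * Real.sin κ) = Real.sin k - k * Real.cos k := by
  have h : ∀ x ∈ Set.uIcc (0 : ℝ) k,
      HasDerivAt (fun y : ℝ => Real.sin y - y * Real.cos y) (x * Real.sin x) x := by
    intro x _
    have h1 : HasDerivAt Real.sin (Real.cos x) x := Real.hasDerivAt_sin x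
    have h2 : HasDerivAt (fun y : ℝ => y * Real.cos y)
        (1 * Real.cos x + x * (-Real.sin x)) x :=
      (hasDerivAt_id x).mul (Real.hasDerivAt_cos x)
    have : HasDerivAt (fun y : ℝ => Real.sin y - y * Real.cos y)
        (Real.cos x - (1 * Real.cos x + x * (-Real.sin x))) x := h1.sub h2
    convert this using 1
    ring
  rw [intervalIntegral.integral_eq_sub_of_hasDerivAt h
    ((continuous_id.mul Real.continuous_sin).intervalIntegrable 0 k)]
  simp

/-- **`N(s) = s·sin s` is probing but not Nussbaum (Section 2.2)**.
The continuous function `N(s) = s·sin s` satisfies `limsup_{s→∞} N(s) = +∞` and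
`liminf_{s→∞} N(s) = −∞` (hence is surjective onto `ℝ`), but fails the Nussbaum
properties: for every `k > 0`, `(1/k)·∫₀^k κ·sin κ dκ = (sin k)/k − cos k ≤ 2`, so
the Nussbaum supremum condition fails at `k⁰ = 0`. -/
theorem sin_probing_not_nussbaum :
    limsup (fun s : ℝ => ((s * Real.sin s : ℝ) : EReal)) atTop = ⊤ ∧
    liminf (fun s : ℝ => ((s * Real.sin s : ℝ) : EReal)) atTop = ⊥ ∧
    SurjOn (fun s : ℝ => s * Real.sin s) (Ici 0) univ ∧
    (∀ k : ℝ, 0 < k →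
      (1 / k) * ∫ κ in (0 : ℝ)..k, κ * Real.sin κ = Real.sin k / k - Real.cos k) ∧
    (∀ k : ℝ, 0 < k → (1 / k) * ∫ κ in (0 : ℝ)..k, κ * Real.sin κ ≤ 2) ∧
    ¬ (∀ M : ℝ, ∃ k : ℝ, 0 < k ∧
        M < (1 / (k - 0)) * ∫ κ in (0 : ℝ)..k, (fun s => s * Real.sin s) κ) := by
  have havg : ∀ k : ℝ, 0 < k →
      (1 / k) * ∫ κ in (0 : ℝ)..k, κ * Real.sin κ = Real.sin k / k - Real.cos k := by
    intro k hk
    rw [sps_integral]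
    field_simp
  have hbd : ∀ k : ℝ, 0 < k → (1 / k) * ∫ κ in (0 : ℝ)..k, κ * Real.sin κ ≤ 2 := by
    intro k hk
    rw [havg k hk]
    have h1 : Real.sin k / k ≤ 1 := by
      rw [div_le_one hk]
      exact Real.sin_le hk.le
    have h2 : -1 ≤ Real.cos k := Real.neg_one_le_cos k
    linarith
  refine ⟨?_, ?_, ?_, havg, hbd, ?_⟩
  · rw [EReal.eq_top_iff_forall_lt]
    intro y
    refine lt_of_lt_of_le (EReal.coe_lt_coe_iff.2 (lt_add_one y))
      (le_limsup_of_frequently_le' ?_)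
    rw [frequently_atTop]
    intro a
    obtain ⟨s, hs, hcs⟩ := sps_aux_big a (y + 1)
    exact ⟨s, hs, EReal.coe_le_coe_iff.2 hcs⟩
  · rw [EReal.eq_bot_iff_forall_lt]
    intro y
    refine lt_of_le_of_lt (liminf_le_of_frequently_le' ?_)
      (EReal.coe_lt_coe_iff.2 (sub_one_lt y))
    rw [frequently_atTop]
    intro a
    obtain ⟨s, hs, hcs⟩ := sps_aux_small a (y - 1)
    exact ⟨s, hs, EReal.coe_le_coe_iff.2 hcs⟩
  · intro y _
    obtain ⟨n, hn⟩ := exists_nat_ge |y|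
    set a : ℝ := π / 2 + n * (2 * π) with ha
    have hna : (n : ℝ) ≤ a := by
      rw [ha]
      nlinarith [Real.pi_gt_three, Nat.cast_nonneg (α := ℝ) n]
    have ha0 : 0 ≤ a := le_trans (Nat.cast_nonneg n) hna
    have hfa : a * Real.sin a = a := by
      rw [ha, Real.sin_add_nat_mul_two_pi, Real.sin_pi_div_two, mul_one]
    have hfb : (a + π) * Real.sin (a + π) = -(a + π) := by
      rw [Real.sin_add_pi, ha, Real.sin_add_nat_mul_two_pi, Real.sin_pi_div_two]
      ring
    have hab : a ≤ a + π := by nlinarith [Real.pi_gt_three]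
    have hsub := intermediate_value_Icc' hab
      ((continuous_id.mul Real.continuous_sin).continuousOn
        (s := Icc a (a + π)))
    have hy : y ∈ Icc ((fun s : ℝ => s * Real.sin s) (a + π))
        ((fun s : ℝ => s * Real.sin s) a) := by
      simp only [hfa, hfb]
      have hya := abs_le.1 hn
      constructor
      · nlinarith [Real.pi_gt_three]
      · nlinarith []
    obtain ⟨x, hx, hfx⟩ := hsub hy
    exact ⟨x, le_trans ha0 hx.1, hfx⟩
  · intro h
    obtain ⟨k, hk, hM⟩ := h 2
    simp only [sub_zero] at hM
    exact absurd hM (not_lt.2 (hbd k hk))
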